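/- Let d, n, t be natural numbers with n > (d+1)·t, and let v : Fin n → EuclideanSpace ℝ (Fin d) be any family of n points. Then there exists a point y ∈ EuclideanSpace ℝ (Fin d) such that for every subset T ⊆ Fin n with |T| = n − t, y lies in the convex hull of {v i : i ∈ T}. (In particular, y lies in every closed ball, hence in the minimum enclosing ball, of every such subset, so n > (d+1)t nodes suffice to satisfy MEB validity.) -/
import Mathlib

/-- If `n > (d+1)·t`, there is a point lying in the convex hull of `{v i : i ∈ T}`
for every subset `T ⊆ Fin n` of cardinality `n - t` (hence in the minimum enclosing
ball of every such subset), so `n > (d+1)t` nodes suffice for MEB validity. -/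
theorem meb_validity_sufficient (d n t : ℕ) (hn : n > (d + 1) * t)
    (v : Fin n → EuclideanSpace ℝ (Fin d)) :
    ∃ y : EuclideanSpace ℝ (Fin d),
      ∀ T : Finset (Fin n), T.card = n - t → y ∈ convexHull ℝ (v '' (T : Set (Fin n))) := by
  classical
  set F : Finset (Fin n) → Set (EuclideanSpace ℝ (Fin d)) :=
    fun T => convexHull ℝ (v '' (T : Set (Fin n)))
  set s : Finset (Finset (Fin n)) :=
    Finset.univ.filter (fun T => T.card = n - t) with hs
  have ht : t ≤ n := le_trans (Nat.le_mul_of_pos_left t (Nat.succ_pos d)) hn.le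
  have key : (⋂ T ∈ s, F T).Nonempty := by
    apply Convex.helly_theorem' (𝕜 := ℝ)
    · intro T _; exact convex_convexHull ℝ _
    · intro I hI hIcard
      have hdim : Module.finrank ℝ (EuclideanSpace ℝ (Fin d)) = d := by
        simp [finrank_euclideanSpace]
      rw [hdim] at hIcard
      -- the union of complements of members of I has card ≤ (d+1)*t < n
      have hcompl : ∀ T ∈ I, Tᶜ.card = t := by
        intro T hT
        have := (Finset.mem_filter.mp (hI hT)).2
        rw [Finset.card_compl, this, Fintype.card_fin]
        omega
      have hcard : (I.biUnion (fun T => Tᶜ)).card < n := by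
        calc (I.biUnion (fun T => Tᶜ)).card ≤ ∑ T ∈ I, Tᶜ.card :=
              Finset.card_biUnion_le
          _ = I.card * t := by
              rw [Finset.sum_congr rfl hcompl, Finset.sum_const, smul_eq_mul]
          _ ≤ (d + 1) * t := Nat.mul_le_mul_right t hIcard
          _ < n := hn
      obtain ⟨i, hi⟩ : ∃ i : Fin n, i ∉ I.biUnion (fun T => Tᶜ) := by
        by_contra h
        push_neg at h
        have : (Finset.univ : Finset (Fin n)) ⊆ I.biUnion (fun T => Tᶜ) :=
          fun i _ => h i
        have := Finset.card_le_card this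
        simp at this
        omega
      refine ⟨v i, ?_⟩
      simp only [Set.mem_iInter]
      intro T hT
      have hiT : i ∈ T := by
        by_contra hiT
        exact hi (Finset.mem_biUnion.mpr ⟨T, hT, Finset.mem_compl.mpr hiT⟩)
      exact subset_convexHull ℝ _ ⟨i, by simpa using hiT, rfl⟩
  obtain ⟨y, hy⟩ := key
  refine ⟨y, fun T hT => ?_⟩
  have : T ∈ s := Finset.mem_filter.mpr ⟨Finset.mem_univ _, hT⟩
  exact Set.mem_iInter₂.mp hy T this
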